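/- For real x ≥ 1, the ratio K_0(x)/I_0(x) satisfies 0 < K_0(x)/I_0(x) < π e^{-4x}, where I_0(x) = (1/π)∫₀^π e^{2x cos u} du and K_0(x) = ∫₀^∞ e^{-2x cosh v} dv. -/

import Mathlib

open Real MeasureTheory Set

lemma quad_le_cosh (v : ℝ) (hv : 0 ≤ v) : 1 + v ^ 2 / 2 ≤ Real.cosh v := by
  have h1 : Real.cosh v = Real.cosh (v / 2) ^ 2 + Real.sinh (v / 2) ^ 2 := by
    rw [← Real.cosh_two_mul]; ring_nf
  have h2 : Real.cosh (v / 2) ^ 2 = Real.sinh (v / 2) ^ 2 + 1 := Real.cosh_sq _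
  have h3 : v / 2 ≤ Real.sinh (v / 2) := Real.self_le_sinh_iff.2 (by linarith)
  nlinarith [sq_nonneg (Real.sinh (v / 2) - v / 2)]

theorem K0_div_I0_bounds (x : ℝ) (hx : 1 ≤ x) :
    0 < (∫ v in Set.Ioi (0:ℝ), Real.exp (-2 * x * Real.cosh v)) /
        ((1 / π) * ∫ u in (0:ℝ)..π, Real.exp (2 * x * Real.cos u)) ∧
    (∫ v in Set.Ioi (0:ℝ), Real.exp (-2 * x * Real.cosh v)) /
        ((1 / π) * ∫ u in (0:ℝ)..π, Real.exp (2 * x * Real.cos u)) <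
      π * Real.exp (-4 * x) := by
  have hx0 : (0:ℝ) < x := by linarith
  have hπ3 : (3:ℝ) < π := Real.pi_gt_three
  have hπ0 : (0:ℝ) < π := by linarith
  have he2 : (2:ℝ) ≤ Real.exp 1 := by
    have := Real.add_one_le_exp (1:ℝ); linarith
  -- continuity
  have cf : Continuous fun v : ℝ => Real.exp (-2 * x * Real.cosh v) := by fun_prop
  have cg : Continuous fun u : ℝ => Real.exp (2 * x * Real.cos u) := by fun_prop
  have cq : Continuous fun u : ℝ => Real.exp (2 * x - x * u ^ 2) := by fun_prop
  -- integrability of the K integrand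
  have hfint : IntegrableOn (fun v => Real.exp (-2 * x * Real.cosh v)) (Ioi (0:ℝ)) := by
    refine Integrable.mono' (exp_neg_integrableOn_Ioi 0 (one_pos)) cf.aestronglyMeasurable ?_
    filter_upwards [ae_restrict_mem measurableSet_Ioi] with v hv
    rw [Real.norm_eq_abs, abs_of_pos (Real.exp_pos _), Real.exp_le_exp]
    have h1 := quad_le_cosh v (le_of_lt hv)
    have h2 : x * (1 + v ^ 2 / 2) ≤ x * Real.cosh v :=
      mul_le_mul_of_nonneg_left h1 hx0.le
    nlinarith [sq_nonneg (v - 1), (le_of_lt (mem_Ioi.mp hv)), h2, mul_le_mul_of_nonneg_right hx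
      (show (0:ℝ) ≤ 1 + v ^ 2 / 2 by positivity)]
  have hgauss : Integrable (fun v : ℝ => Real.exp (-x * v ^ 2)) := integrable_exp_neg_mul_sq hx0
  -- K bound
  have hKle : (∫ v in Set.Ioi (0:ℝ), Real.exp (-2 * x * Real.cosh v)) ≤
      Real.exp (-2 * x) * (Real.sqrt (π / x) / 2) := by
    have step : (∫ v in Set.Ioi (0:ℝ), Real.exp (-2 * x * Real.cosh v)) ≤
        ∫ v in Set.Ioi (0:ℝ), Real.exp (-2 * x) * Real.exp (-x * v ^ 2) := by
      refine setIntegral_mono_on hfint (hgauss.integrableOn.const_mul _) measurableSet_Ioi ?_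
      intro v hv
      rw [← Real.exp_add, Real.exp_le_exp]
      have h1 := quad_le_cosh v (le_of_lt (mem_Ioi.mp hv))
      have h2 : x * (1 + v ^ 2 / 2) ≤ x * Real.cosh v :=
        mul_le_mul_of_nonneg_left h1 hx0.le
      nlinarith
    rwa [MeasureTheory.integral_const_mul, integral_gaussian_Ioi x] at step
  -- K positivity
  have hKpos : 0 < ∫ v in Set.Ioi (0:ℝ), Real.exp (-2 * x * Real.cosh v) := by
    rw [setIntegral_pos_iff_support_of_nonneg_ae
      (Filter.Eventually.of_forall fun v => (Real.exp_pos _).le) hfint]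
    have hsupp : (Function.support fun v : ℝ => Real.exp (-2 * x * Real.cosh v)) = Set.univ := by
      ext v; simp [Function.mem_support, (Real.exp_pos _).ne']
    rw [hsupp, Set.univ_inter]
    simp [Real.volume_Ioi]
  -- pointwise q ≤ g
  have hqg : ∀ u : ℝ, Real.exp (2 * x - x * u ^ 2) ≤ Real.exp (2 * x * Real.cos u) := by
    intro u
    rw [Real.exp_le_exp]
    have h1 := Real.one_sub_sq_div_two_le_cos (x := u)
    have h2 : 2 * x * (1 - u ^ 2 / 2) ≤ 2 * x * Real.cos u :=
      mul_le_mul_of_nonneg_left h1 (by linarith)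
    nlinarith
  -- the interval integral of the difference is at least exp(-2x)/4
  have hdiff : Real.exp (-2 * x) / 4 ≤
      ∫ u in (0:ℝ)..π, (Real.exp (2 * x * Real.cos u) - Real.exp (2 * x - x * u ^ 2)) := by
    have hint : ∀ a b : ℝ, IntervalIntegrable
        (fun u => Real.exp (2 * x * Real.cos u) - Real.exp (2 * x - x * u ^ 2)) volume a b :=
      fun a b => (cg.sub cq).intervalIntegrable a b
    have hsplit1 : (∫ u in (0:ℝ)..(5/2:ℝ),
          (Real.exp (2 * x * Real.cos u) - Real.exp (2 * x - x * u ^ 2)))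
        + (∫ u in (5/2:ℝ)..π,
          (Real.exp (2 * x * Real.cos u) - Real.exp (2 * x - x * u ^ 2)))
        = ∫ u in (0:ℝ)..π, (Real.exp (2 * x * Real.cos u) - Real.exp (2 * x - x * u ^ 2)) :=
      intervalIntegral.integral_add_adjacent_intervals (hint _ _) (hint _ _)
    have hsplit2 : (∫ u in (5/2:ℝ)..(3:ℝ),
          (Real.exp (2 * x * Real.cos u) - Real.exp (2 * x - x * u ^ 2)))
        + (∫ u in (3:ℝ)..π,
          (Real.exp (2 * x * Real.cos u) - Real.exp (2 * x - x * u ^ 2)))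
        = ∫ u in (5/2:ℝ)..π,
          (Real.exp (2 * x * Real.cos u) - Real.exp (2 * x - x * u ^ 2)) :=
      intervalIntegral.integral_add_adjacent_intervals (hint _ _) (hint _ _)
    have h1 : 0 ≤ ∫ u in (0:ℝ)..(5/2:ℝ),
        (Real.exp (2 * x * Real.cos u) - Real.exp (2 * x - x * u ^ 2)) :=
      intervalIntegral.integral_nonneg (by norm_num) (fun u _ => by linarith [hqg u])
    have h2 : 0 ≤ ∫ u in (3:ℝ)..π,
        (Real.exp (2 * x * Real.cos u) - Real.exp (2 * x - x * u ^ 2)) :=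
      intervalIntegral.integral_nonneg (by linarith) (fun u _ => by linarith [hqg u])
    have h3 : Real.exp (-2 * x) / 4 ≤ ∫ u in (5/2:ℝ)..(3:ℝ),
        (Real.exp (2 * x * Real.cos u) - Real.exp (2 * x - x * u ^ 2)) := by
      have hconst : (∫ _ in (5/2:ℝ)..(3:ℝ), (Real.exp (-2 * x) / 2 : ℝ))
          = Real.exp (-2 * x) / 4 := by
        rw [intervalIntegral.integral_const, smul_eq_mul]; ring
      rw [← hconst]
      refine intervalIntegral.integral_mono_on (by norm_num)
        (intervalIntegrable_const) (hint _ _) ?_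
      intro u hu
      obtain ⟨hu1, hu2⟩ := hu
      have hcos : Real.exp (-2 * x) ≤ Real.exp (2 * x * Real.cos u) := by
        rw [Real.exp_le_exp]
        have h1 : 2 * x * (-1) ≤ 2 * x * Real.cos u :=
          mul_le_mul_of_nonneg_left (Real.neg_one_le_cos u) (by linarith)
        linarith
      have hq : Real.exp (2 * x - x * u ^ 2) ≤ Real.exp (-2 * x) / 2 := by
        have e1 : Real.exp (2 * x - x * u ^ 2) ≤ Real.exp (-2 * x + -1) := by
          rw [Real.exp_le_exp]
          have h25 : (25/4 : ℝ) ≤ u ^ 2 := by nlinarith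
          have h26 : x * (25/4) ≤ x * u ^ 2 := mul_le_mul_of_nonneg_left h25 hx0.le
          linarith
        have e2 : Real.exp (-2 * x + -1) = Real.exp (-2 * x) * Real.exp (-1) :=
          Real.exp_add _ _
        have e3 : Real.exp (-1 : ℝ) ≤ 1 / 2 := by
          have hm : Real.exp (-1 : ℝ) * Real.exp 1 = 1 := by
            rw [← Real.exp_add]; norm_num
          nlinarith [Real.exp_pos (-1 : ℝ)]
        nlinarith [Real.exp_pos (-2 * x)]
      linarith
    linarith [hsplit1, hsplit2]
  -- tail bound
  have htail : (∫ u in Set.Ioi π, Real.exp (-x * u ^ 2)) ≤ Real.exp (-6 * x) * Real.exp (-π) := by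
    have step : (∫ u in Set.Ioi π, Real.exp (-x * u ^ 2)) ≤
        ∫ u in Set.Ioi π, Real.exp (-6 * x) * Real.exp (-u) := by
      refine setIntegral_mono_on hgauss.integrableOn
        (((exp_neg_integrableOn_Ioi π one_pos).congr_fun
          (fun u _ => by norm_num) measurableSet_Ioi).const_mul _) measurableSet_Ioi ?_
      intro u hu
      have hu3 : (3:ℝ) < u := lt_trans hπ3 (mem_Ioi.mp hu)
      rw [← Real.exp_add, Real.exp_le_exp]
      have h1 : u + 6 ≤ u ^ 2 := by nlinarith
      have h2 : x * (u + 6) ≤ x * u ^ 2 := mul_le_mul_of_nonneg_left h1 hx0.le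
      nlinarith
    rwa [MeasureTheory.integral_const_mul, integral_exp_neg_Ioi] at step
  -- split the gaussian integral
  have hgsplit : (∫ u in (0:ℝ)..π, Real.exp (-x * u ^ 2))
      = Real.sqrt (π / x) / 2 - ∫ u in Set.Ioi π, Real.exp (-x * u ^ 2) := by
    have hunion : (∫ u in Set.Ioc (0:ℝ) π, Real.exp (-x * u ^ 2))
        + (∫ u in Set.Ioi π, Real.exp (-x * u ^ 2))
        = ∫ u in Set.Ioi (0:ℝ), Real.exp (-x * u ^ 2) := by
      rw [← setIntegral_union (Set.Ioc_disjoint_Ioi le_rfl) measurableSet_Ioi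
        hgauss.integrableOn hgauss.integrableOn,
        Set.Ioc_union_Ioi_eq_Ioi (le_of_lt hπ0)]
    rw [intervalIntegral.integral_of_le (le_of_lt hπ0)]
    rw [integral_gaussian_Ioi x] at hunion
    linarith
  -- lower bound on the interval integral Iint
  have hIlow : Real.exp (2 * x) * (Real.sqrt (π / x) / 2) <
      ∫ u in (0:ℝ)..π, Real.exp (2 * x * Real.cos u) := by
    have hIeq : (∫ u in (0:ℝ)..π, Real.exp (2 * x * Real.cos u))
        = (∫ u in (0:ℝ)..π, Real.exp (2 * x - x * u ^ 2))
          + ∫ u in (0:ℝ)..π,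
            (Real.exp (2 * x * Real.cos u) - Real.exp (2 * x - x * u ^ 2)) := by
      rw [← intervalIntegral.integral_add (cq.intervalIntegrable _ _)
        (show IntervalIntegrable (fun u => Real.exp (2 * x * Real.cos u) - Real.exp (2 * x - x * u ^ 2)) volume 0 π from (cg.sub cq).intervalIntegrable _ _)]
      simp
    have hqeq : (∫ u in (0:ℝ)..π, Real.exp (2 * x - x * u ^ 2))
        = Real.exp (2 * x) * ∫ u in (0:ℝ)..π, Real.exp (-x * u ^ 2) := by
      rw [← intervalIntegral.integral_const_mul]
      congr 1; ext u; rw [← Real.exp_add]; ring_nf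
    have hTsmall : Real.exp (2 * x) * (Real.exp (-6 * x) * Real.exp (-π))
        < Real.exp (-2 * x) / 4 := by
      have e1 : Real.exp (2 * x) * (Real.exp (-6 * x) * Real.exp (-π))
          = Real.exp (-2 * x) * Real.exp (-2 * x - π) := by
        rw [← Real.exp_add, ← Real.exp_add, ← Real.exp_add]; ring_nf
      rw [e1]
      have e2 : Real.exp (-2 * x - π) < 1 / 4 := by
        have h5 : Real.exp (-2 * x - π) ≤ Real.exp (-2 : ℝ) := by
          rw [Real.exp_le_exp]; linarith
        have h6 : (4:ℝ) ≤ Real.exp 2 := by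
          have : Real.exp 2 = Real.exp 1 * Real.exp 1 := by
            rw [← Real.exp_add]; norm_num
          nlinarith
        have h8 : Real.exp (-2 : ℝ) < 1 / 4 := by
          have hm : Real.exp (-2 : ℝ) * (Real.exp 1 * Real.exp 1) = 1 := by
            rw [← Real.exp_add, ← Real.exp_add]; norm_num
          have h11 : (2.7182818283 : ℝ) < Real.exp 1 := Real.exp_one_gt_d9
          nlinarith [Real.exp_pos (-2 : ℝ)]
        linarith
      nlinarith [Real.exp_pos (-2 * x)]
    calc Real.exp (2 * x) * (Real.sqrt (π / x) / 2)
        = Real.exp (2 * x) * ((Real.sqrt (π / x) / 2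
            - ∫ u in Set.Ioi π, Real.exp (-x * u ^ 2))
          + ∫ u in Set.Ioi π, Real.exp (-x * u ^ 2)) := by ring
      _ = Real.exp (2 * x) * (∫ u in (0:ℝ)..π, Real.exp (-x * u ^ 2))
          + Real.exp (2 * x) * ∫ u in Set.Ioi π, Real.exp (-x * u ^ 2) := by
          rw [hgsplit]; ring
      _ ≤ Real.exp (2 * x) * (∫ u in (0:ℝ)..π, Real.exp (-x * u ^ 2))
          + Real.exp (2 * x) * (Real.exp (-6 * x) * Real.exp (-π)) := by
          have := mul_le_mul_of_nonneg_left htail (Real.exp_pos (2 * x)).le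
          linarith
      _ < Real.exp (2 * x) * (∫ u in (0:ℝ)..π, Real.exp (-x * u ^ 2))
          + Real.exp (-2 * x) / 4 := by linarith
      _ ≤ ∫ u in (0:ℝ)..π, Real.exp (2 * x * Real.cos u) := by
          rw [hIeq, hqeq]; linarith
  -- assemble
  have hsqrtpos : 0 < Real.sqrt (π / x) := Real.sqrt_pos.2 (div_pos hπ0 hx0)
  have hIpos : 0 < (1 / π) * ∫ u in (0:ℝ)..π, Real.exp (2 * x * Real.cos u) := by
    have : 0 < Real.exp (2 * x) * (Real.sqrt (π / x) / 2) := by positivity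
    have h0 : 0 < ∫ u in (0:ℝ)..π, Real.exp (2 * x * Real.cos u) := lt_trans this hIlow
    positivity
  constructor
  · exact div_pos hKpos hIpos
  · rw [div_lt_iff₀ hIpos]
    have hcancel : π * (1 / π) = 1 := mul_one_div_cancel hπ0.ne'
    have key : π * Real.exp (-4 * x) * ((1 / π) * ∫ u in (0:ℝ)..π, Real.exp (2 * x * Real.cos u))
        = Real.exp (-4 * x) * ∫ u in (0:ℝ)..π, Real.exp (2 * x * Real.cos u) := by
      calc π * Real.exp (-4 * x) * ((1 / π) * ∫ u in (0:ℝ)..π, Real.exp (2 * x * Real.cos u))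
          = (π * (1 / π)) * (Real.exp (-4 * x) * ∫ u in (0:ℝ)..π, Real.exp (2 * x * Real.cos u)) := by
            ring
        _ = Real.exp (-4 * x) * ∫ u in (0:ℝ)..π, Real.exp (2 * x * Real.cos u) := by
            rw [hcancel, one_mul]
    rw [key]
    calc (∫ v in Set.Ioi (0:ℝ), Real.exp (-2 * x * Real.cosh v))
        ≤ Real.exp (-2 * x) * (Real.sqrt (π / x) / 2) := hKle
      _ = Real.exp (-4 * x) * (Real.exp (2 * x) * (Real.sqrt (π / x) / 2)) := by
          rw [← mul_assoc, ← Real.exp_add]; ring_nf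
      _ < Real.exp (-4 * x) * ∫ u in (0:ℝ)..π, Real.exp (2 * x * Real.cos u) := by
          exact mul_lt_mul_of_pos_left hIlow (Real.exp_pos _)
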